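/- Let $q > 1$ be real and let $\sigma \ge 0$. Define the moment sums $M_q(v) = \sum_{j=1}^v \big(\sigma + \sqrt{j}\big)^{-2q}$. Then $\lim_{v\to\infty} \frac{\log M_q(v) - q\,\log M_1(v)}{(1-q)\,\log v} = 0.$ -/
import Mathlib

open Filter Real Finset

private lemma aux_log_add_div_tendsto :
    Filter.Tendsto (fun y : ℝ => (Real.log 2 + Real.log y) / y) Filter.atTop (nhds 0) := by
  have h1 : Filter.Tendsto (fun y : ℝ => Real.log 2 / y) Filter.atTop (nhds 0) :=
    Filter.Tendsto.div_atTop tendsto_const_nhds tendsto_id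
  have h2 : Filter.Tendsto (fun y : ℝ => Real.log y / y) Filter.atTop (nhds 0) :=
    Real.isLittleO_log_id_atTop.tendsto_div_nhds_zero
  have h := h1.add h2
  simp only [add_zero] at h
  refine h.congr fun y => ?_
  rw [← add_div]

/-- Corollary 2.2 for `n = 2` (`ℓ_j = √j`): the fractal exponent
`D_q = lim H_q / log v` vanishes. -/
theorem fractal_exponent_sqrt_zero
    (q : ℝ) (hq : 1 < q) (σ : ℝ) (hσ : 0 ≤ σ)
    (M : ℝ → ℕ → ℝ)
    (hM : ∀ p v, M p v = ∑ j ∈ Finset.Icc 1 v,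
      (σ + Real.sqrt j) ^ (-(2*p))) :
    Filter.Tendsto (fun v : ℕ =>
        (Real.log (M q v) - q * Real.log (M 1 v)) / ((1-q) * Real.log v))
      Filter.atTop (nhds 0) := by
  have hσ1 : (0:ℝ) < σ + 1 := by linarith
  -- base positivity
  have hbase : ∀ j : ℕ, 1 ≤ j → (1:ℝ) ≤ σ + Real.sqrt j := by
    intro j hj
    have h1 : (1:ℝ) ≤ Real.sqrt j := by
      rw [Real.one_le_sqrt]
      exact_mod_cast hj
    linarith
  have hbpos : ∀ j : ℕ, 1 ≤ j → (0:ℝ) < σ + Real.sqrt j := fun j hj =>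
    lt_of_lt_of_le one_pos (hbase j hj)
  -- term comparison with j^(-p)
  have hterm_le : ∀ (p : ℝ), 0 < p → ∀ j : ℕ, 1 ≤ j →
      (σ + Real.sqrt j) ^ (-(2*p)) ≤ (j:ℝ) ^ (-p) := by
    intro p hp j hj
    have hj0 : (0:ℝ) < (j:ℝ) := by exact_mod_cast Nat.lt_of_lt_of_le Nat.zero_lt_one hj
    have hs : (0:ℝ) < Real.sqrt j := Real.sqrt_pos.mpr hj0
    have h1 : (σ + Real.sqrt j) ^ (-(2*p)) ≤ (Real.sqrt j) ^ (-(2*p)) :=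
      Real.rpow_le_rpow_of_nonpos hs (by linarith) (by linarith)
    have h2 : (Real.sqrt j) ^ (-(2*p)) = (j:ℝ) ^ (-p) := by
      rw [Real.sqrt_eq_rpow, ← Real.rpow_mul hj0.le]
      congr 1; ring
    rw [← h2]; exact h1
  -- lower bound for M p v
  have hMlb : ∀ (p : ℝ) (v : ℕ), 1 ≤ v → (σ + 1) ^ (-(2*p)) ≤ M p v := by
    intro p v hv
    rw [hM]
    have h := Finset.single_le_sum (f := fun j : ℕ => (σ + Real.sqrt j) ^ (-(2*p)))
      (fun j hj => (Real.rpow_pos_of_pos (hbpos j (Finset.mem_Icc.mp hj).1) _).le)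
      (Finset.mem_Icc.mpr ⟨le_refl 1, hv⟩)
    simpa [Real.sqrt_one] using h
  have hMpos : ∀ (p : ℝ) (v : ℕ), 1 ≤ v → 0 < M p v := fun p v hv =>
    lt_of_lt_of_le (Real.rpow_pos_of_pos hσ1 _) (hMlb p v hv)
  -- log v tends to infinity
  have hLtop : Filter.Tendsto (fun v : ℕ => Real.log v) Filter.atTop Filter.atTop :=
    Real.tendsto_log_atTop.comp tendsto_natCast_atTop_atTop
  -- M q converges
  have hmono : Monotone (M q) := by
    intro v w hvw
    rw [hM, hM]
    refine Finset.sum_le_sum_of_subset_of_nonneg (Finset.Icc_subset_Icc_right hvw) ?_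
    intro j hj _
    exact (Real.rpow_pos_of_pos (hbpos j (Finset.mem_Icc.mp hj).1) _).le
  have hqs : Summable (fun n : ℕ => (n:ℝ) ^ (-q)) :=
    Real.summable_nat_rpow.mpr (by linarith)
  have hqs' : Summable (fun n : ℕ => ((n:ℝ) + 1) ^ (-q)) := by
    have := (summable_nat_add_iff (f := fun n : ℕ => (n:ℝ) ^ (-q)) 1).mpr hqs
    refine this.congr fun n => ?_
    push_cast; ring_nf
  have hMub : ∀ v : ℕ, M q v ≤ ∑' n : ℕ, ((n:ℝ) + 1) ^ (-q) := by
    intro v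
    rw [hM, ← Finset.Ico_add_one_right_eq_Icc, Finset.sum_Ico_eq_sum_range]
    have h1 : ∀ i ∈ Finset.range (v + 1 - 1),
        (σ + Real.sqrt (1 + i : ℕ)) ^ (-(2*q)) ≤ ((i:ℝ) + 1) ^ (-q) := by
      intro i _
      have := hterm_le q (by linarith) (1 + i) (Nat.le_add_right 1 i)
      have hc : ((1 + i : ℕ) : ℝ) = (i:ℝ) + 1 := by push_cast; ring
      rw [hc] at this ⊢; exact this
    calc ∑ i ∈ Finset.range (v + 1 - 1), (σ + Real.sqrt (1 + i : ℕ)) ^ (-(2*q))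
        ≤ ∑ i ∈ Finset.range (v + 1 - 1), ((i:ℝ) + 1) ^ (-q) := Finset.sum_le_sum h1
      _ ≤ ∑' n : ℕ, ((n:ℝ) + 1) ^ (-q) := by
          exact Summable.sum_le_tsum _ (fun n _ => by positivity) hqs'
  have hbdd : BddAbove (Set.range (M q)) := by
    refine ⟨∑' n : ℕ, ((n:ℝ) + 1) ^ (-q), ?_⟩
    rintro x ⟨v, rfl⟩
    exact hMub v
  have hMconv : Filter.Tendsto (M q) Filter.atTop (nhds (⨆ v, M q v)) :=
    tendsto_atTop_ciSup hmono hbdd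
  have hLqpos : 0 < ⨆ v, M q v :=
    lt_of_lt_of_le (hMpos q 1 le_rfl) (le_ciSup hbdd 1)
  -- A v / log v → 0
  have TA : Filter.Tendsto (fun v : ℕ => Real.log (M q v) / Real.log v)
      Filter.atTop (nhds 0) :=
    Filter.Tendsto.div_atTop (hMconv.log hLqpos.ne') hLtop
  -- harmonic bound : M 1 v ≤ 1 + log v
  have hM1ub : ∀ v : ℕ, M 1 v ≤ 1 + Real.log v := by
    intro v
    rw [hM]
    calc ∑ j ∈ Finset.Icc 1 v, (σ + Real.sqrt j) ^ (-(2*(1:ℝ)))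
        ≤ ∑ j ∈ Finset.Icc 1 v, ((j:ℝ))⁻¹ := by
          refine Finset.sum_le_sum fun j hj => ?_
          have h := hterm_le 1 one_pos j (Finset.mem_Icc.mp hj).1
          rwa [Real.rpow_neg_one] at h
      _ = (harmonic v : ℝ) := by
          rw [harmonic_eq_sum_Icc]; push_cast; rfl
      _ ≤ 1 + Real.log v := harmonic_le_one_add_log v
  -- B v / log v → 0 via squeeze for v ≥ 3
  have hlog3 : (1:ℝ) ≤ Real.log 3 := by
    rw [Real.le_log_iff_exp_le (by norm_num)]
    calc Real.exp 1 ≤ 2.7182818286 := Real.exp_one_lt_d9.le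
      _ ≤ 3 := by norm_num
  have hLlb : ∀ v : ℕ, 3 ≤ v → (1:ℝ) ≤ Real.log v := by
    intro v hv
    refine hlog3.trans (Real.log_le_log (by norm_num) ?_)
    exact_mod_cast hv
  have TBlow : Filter.Tendsto (fun v : ℕ => (-(2 * Real.log (σ + 1))) / Real.log v)
      Filter.atTop (nhds 0) := Filter.Tendsto.div_atTop tendsto_const_nhds hLtop
  have TBhigh : Filter.Tendsto
      (fun v : ℕ => (Real.log 2 + Real.log (Real.log v)) / Real.log v)
      Filter.atTop (nhds 0) := aux_log_add_div_tendsto.comp hLtop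
  have TB : Filter.Tendsto (fun v : ℕ => Real.log (M 1 v) / Real.log v)
      Filter.atTop (nhds 0) := by
    refine tendsto_of_tendsto_of_tendsto_of_le_of_le' TBlow TBhigh ?_ ?_
    · filter_upwards [Filter.eventually_atTop.mpr ⟨3, fun v hv => hv⟩] with v hv
      have hLv : (1:ℝ) ≤ Real.log v := hLlb v hv
      have hv1 : 1 ≤ v := le_trans (by norm_num) hv
      have hlb : -(2 * Real.log (σ + 1)) ≤ Real.log (M 1 v) := by
        have h1 : Real.log ((σ + 1) ^ (-(2*(1:ℝ)))) ≤ Real.log (M 1 v) :=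
          Real.log_le_log (Real.rpow_pos_of_pos hσ1 _) (hMlb 1 v hv1)
        rwa [Real.log_rpow hσ1, show (-(2*(1:ℝ))) = (-2 : ℝ) by norm_num,
          show (-2 : ℝ) * Real.log (σ + 1) = -(2 * Real.log (σ + 1)) by ring] at h1
      exact div_le_div_of_nonneg_right hlb (by linarith) |>.trans_eq rfl
    · filter_upwards [Filter.eventually_atTop.mpr ⟨3, fun v hv => hv⟩] with v hv
      have hLv : (1:ℝ) ≤ Real.log v := hLlb v hv
      have hv1 : 1 ≤ v := le_trans (by norm_num) hv
      have hub : Real.log (M 1 v) ≤ Real.log 2 + Real.log (Real.log v) := by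
        have h2 : M 1 v ≤ 2 * Real.log v := by
          have := hM1ub v
          linarith
        have h3 := Real.log_le_log (hMpos 1 v hv1) h2
        rwa [Real.log_mul (by norm_num) (by linarith)] at h3
      exact div_le_div_of_nonneg_right hub (by linarith) |>.trans_eq rfl
  -- combine
  have key : Filter.Tendsto (fun v : ℕ =>
      (1/(1-q)) * (Real.log (M q v) / Real.log v)
        - (q/(1-q)) * (Real.log (M 1 v) / Real.log v))
      Filter.atTop (nhds 0) := by
    have := (TA.const_mul (1/(1-q))).sub (TB.const_mul (q/(1-q)))
    simpa using this
  refine key.congr fun v => ?_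
  simp only [div_eq_mul_inv, mul_inv, one_mul]
  ring
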